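/- Let X be a set of n unit vectors spanning R^d, E a subspace of dimension k < d, and A ⊂ [n] with |A| = k+1 such that (x_i)_{i∈A} are linearly independent and dist(x_i, E) ≤ δ for each i ∈ A. Then there exists B ⊂ [n] with |B| = d−k−1 such that (x_i)_{i∈A∪B} is a basis of R^d whose determinant has absolute value at most (1+δ)^{k+1} − 1. -/

import Mathlib

open Matrix Finset

lemma amgm_prod_le_one {ι : Type*} [Fintype ι] (z : ι → ℝ) (hz : ∀ i, 0 ≤ z i)
    (hsum : ∑ i, z i ≤ Fintype.card ι) : ∏ i, z i ≤ 1 := by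
  rcases Nat.eq_zero_or_pos (Fintype.card ι) with h0 | h0
  · have : (Finset.univ : Finset ι) = ∅ := Finset.card_eq_zero.mp (by simpa using h0)
    simp [this]
  set c : ℝ := (Fintype.card ι : ℝ) with hcdef
  have hc : 0 < c := Nat.cast_pos.mpr h0
  have hw : ∀ i ∈ (Finset.univ : Finset ι), (0:ℝ) ≤ c⁻¹ := fun _ _ => by positivity
  have hw' : ∑ _i : ι, (c⁻¹ : ℝ) = 1 := by
    rw [Finset.sum_const, Finset.card_univ, nsmul_eq_mul]
    field_simp; exact hcdef.symm
  have h1 : ∏ i, z i ^ (c⁻¹ : ℝ) ≤ ∑ i, c⁻¹ * z i :=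
    Real.geom_mean_le_arith_mean_weighted Finset.univ _ _ hw hw' (fun i _ => hz i)
  have h2 : ∑ i, c⁻¹ * z i ≤ 1 := by
    rw [← Finset.mul_sum, inv_mul_le_iff₀ hc, mul_one]
    exact hsum
  have h3 : (0:ℝ) ≤ ∏ i, z i ^ (c⁻¹ : ℝ) :=
    Finset.prod_nonneg fun i _ => Real.rpow_nonneg (hz i) _
  have h4 : (∏ i, z i ^ (c⁻¹ : ℝ)) ^ (c : ℝ) ≤ 1 := by
    calc (∏ i, z i ^ (c⁻¹ : ℝ)) ^ (c:ℝ) ≤ 1 ^ (c:ℝ) :=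
          Real.rpow_le_rpow h3 (h1.trans h2) hc.le
      _ = 1 := Real.one_rpow _
  have h5 : (∏ i, z i ^ (c⁻¹ : ℝ)) ^ (c : ℝ) = ∏ i, z i := by
    rw [← Real.finset_prod_rpow _ _ (fun i _ => Real.rpow_nonneg (hz i) _)]
    refine (Finset.prod_congr rfl fun i _ => ?_)
    rw [← Real.rpow_mul (hz i), inv_mul_cancel₀ hc.ne', Real.rpow_one]
  linarith [h4, h5.symm.le]

lemma trace_eq_sum_eigs {d : ℕ} {G : Matrix (Fin d) (Fin d) ℝ} (hG : G.IsHermitian) :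
    G.trace = ∑ i, hG.eigenvalues i := by
  conv_lhs => rw [hG.spectral_theorem]
  rw [Unitary.conjStarAlgAut_apply, Matrix.trace_mul_cycle, Unitary.coe_star_mul_self, Matrix.one_mul, Matrix.trace_diagonal]
  simp [RCLike.ofReal]

lemma det_sq_le_one_of_unit_rows {d : ℕ} (N : Matrix (Fin d) (Fin d) ℝ)
    (h : ∀ i, N i ⬝ᵥ N i = 1) : |N.det| ≤ 1 := by
  have hconj : Nᴴ = Nᵀ := by
    ext i j; simp [Matrix.conjTranspose_apply]
  have hPSD : (N * Nᴴ).PosSemidef := Matrix.posSemidef_self_mul_conjTranspose N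
  have hH := hPSD.isHermitian
  have hdet : (N * Nᴴ).det = N.det ^ 2 := by
    rw [Matrix.det_mul, hconj, Matrix.det_transpose, sq]
  have htr : (N * Nᴴ).trace = d := by
    rw [Matrix.trace]
    rw [hconj]
    have : ∀ i, (N * Nᵀ).diag i = N i ⬝ᵥ N i := by
      intro i; simp [Matrix.diag, Matrix.mul_apply, dotProduct, Matrix.transpose_apply]
    rw [Finset.sum_congr rfl fun i _ => this i]
    simp [h]
  have heig : (N * Nᴴ).det = ∏ i, hH.eigenvalues i := by
    have := hH.det_eq_prod_eigenvalues
    simpa using this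
  have hsum : ∑ i, hH.eigenvalues i = d := by
    rw [← trace_eq_sum_eigs hH, htr]
  have hle : ∏ i, hH.eigenvalues i ≤ 1 := by
    apply amgm_prod_le_one _ (fun i => hPSD.eigenvalues_nonneg i)
    rw [hsum]; simp
  have : N.det ^ 2 ≤ 1 := by rw [← hdet, heig]; exact hle
  nlinarith [abs_nonneg N.det, sq_abs N.det]

lemma abs_det_le_prod_norm_row {d : ℕ} (M : Matrix (Fin d) (Fin d) ℝ) :
    |M.det| ≤ ∏ i, Real.sqrt (M i ⬝ᵥ M i) := by
  by_cases hz : ∃ i, M i = 0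
  · obtain ⟨i, hi⟩ := hz
    have : M.det = 0 := Matrix.det_eq_zero_of_row_eq_zero i (fun j => by rw [hi]; rfl)
    rw [this, abs_zero]
    exact Finset.prod_nonneg fun i _ => Real.sqrt_nonneg _
  push_neg at hz
  set c : Fin d → ℝ := fun i => Real.sqrt (M i ⬝ᵥ M i) with hc
  have hdotnn : ∀ i, 0 ≤ M i ⬝ᵥ M i := fun i =>
    Finset.sum_nonneg fun j _ => mul_self_nonneg _
  have hcpos : ∀ i, 0 < c i := by
    intro i
    apply Real.sqrt_pos.mpr
    rcases (hdotnn i).lt_or_eq with h | h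
    · exact h
    · exfalso
      apply hz i
      have hall := (Finset.sum_eq_zero_iff_of_nonneg (fun j _ => mul_self_nonneg (M i j))).mp h.symm
      funext j
      exact mul_self_eq_zero.mp (hall j (Finset.mem_univ j))
  set N : Matrix (Fin d) (Fin d) ℝ := Matrix.of fun i j => M i j / c i with hN
  have hMN : M = Matrix.diagonal c * N := by
    ext i j
    simp only [hN, Matrix.mul_apply, Matrix.diagonal, Matrix.of_apply]
    rw [Finset.sum_eq_single i]
    · simp only [if_pos rfl, eq_self_iff_true, if_true]
      exact ((div_mul_cancel₀ (M i j) (hcpos i).ne').symm.trans (mul_comm _ _))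
    · intro b _ hb; simp [hb.symm]
    · intro hi; exact absurd (Finset.mem_univ i) hi
  have hNunit : ∀ i, N i ⬝ᵥ N i = 1 := by
    intro i
    have : N i ⬝ᵥ N i = (M i ⬝ᵥ M i) / (c i)^2 := by
      simp only [hN, dotProduct, Matrix.of_apply]
      rw [Finset.sum_div]
      exact Finset.sum_congr rfl fun j _ => by rw [div_mul_div_comm, sq]
    have hdpos : 0 < M i ⬝ᵥ M i := Real.sqrt_pos.mp (hcpos i)
    rw [this, hc]
    simp only []
    rw [Real.sq_sqrt (hdotnn i)]
    exact div_self hdpos.ne'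
  have hdet : M.det = (∏ i, c i) * N.det := by
    rw [hMN, Matrix.det_mul, Matrix.det_diagonal]
  have hcnn : (0:ℝ) ≤ ∏ i, c i := Finset.prod_nonneg fun i _ => (hcpos i).le
  calc |M.det| = (∏ i, c i) * |N.det| := by rw [hdet, abs_mul, abs_of_nonneg hcnn]
    _ ≤ (∏ i, c i) * 1 := mul_le_mul_of_nonneg_left (det_sq_le_one_of_unit_rows N hNunit) hcnn
    _ = ∏ i, c i := mul_one _

lemma det_eq_zero_of_not_li {d : ℕ} (M : Matrix (Fin d) (Fin d) ℝ)
    (h : ¬ LinearIndependent ℝ (fun i => M i)) : M.det = 0 := by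
  by_contra hd
  exact h (Matrix.linearIndependent_rows_iff_isUnit.mpr
    ((Matrix.isUnit_iff_isUnit_det M).mpr (isUnit_iff_ne_zero.mpr hd)))

lemma norm_symm_eq {d : ℕ} (w : Fin d → ℝ) :
    ‖(WithLp.linearEquiv 2 ℝ (Fin d → ℝ)).symm w‖ = Real.sqrt (w ⬝ᵥ w) := by
  rw [EuclideanSpace.norm_eq]
  congr 1
  simp [dotProduct, Real.norm_eq_abs, sq_abs, sq]

lemma exists_good_proj {d : ℕ} (E : Submodule ℝ (Fin d → ℝ)) {δ : ℝ} (u y0 : Fin d → ℝ)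
    (hy0 : y0 ∈ E) (h : Real.sqrt ((u - y0) ⬝ᵥ (u - y0)) ≤ δ) (hu : u ⬝ᵥ u = 1) :
    ∃ y, y ∈ E ∧ Real.sqrt ((u - y) ⬝ᵥ (u - y)) ≤ δ ∧ Real.sqrt (y ⬝ᵥ y) ≤ 1 := by
  set L := WithLp.linearEquiv 2 ℝ (Fin d → ℝ) with hL
  set E2 : Submodule ℝ (EuclideanSpace ℝ (Fin d)) := E.comap L.toLinearMap with hE2
  set u' : EuclideanSpace ℝ (Fin d) := L.symm u with hu'
  set p := Submodule.orthogonalProjection E2 u' with hp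
  refine ⟨L p, ?_, ?_, ?_⟩
  · exact p.2
  · have h1 : Real.sqrt ((u - L p) ⬝ᵥ (u - L p)) = ‖u' - (p : EuclideanSpace ℝ (Fin d))‖ := by
      rw [← norm_symm_eq, map_sub]
      rfl
    rw [h1, show ‖u' - (p : EuclideanSpace ℝ (Fin d))‖ = ‖u' - E2.starProjection u'‖ from rfl, Submodule.starProjection_minimal]
    have hbdd : BddBelow (Set.range fun x : E2 => ‖u' - x‖) := by
      refine ⟨0, ?_⟩
      rintro _ ⟨w, rfl⟩
      positivity
    have hmem : L.symm y0 ∈ E2 := by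
      simp only [hE2, Submodule.mem_comap]
      simpa using hy0
    refine le_trans (ciInf_le hbdd ⟨L.symm y0, hmem⟩) ?_
    have : ‖u' - (L.symm y0 : EuclideanSpace ℝ (Fin d))‖ = Real.sqrt ((u - y0) ⬝ᵥ (u - y0)) := by
      rw [← norm_symm_eq, map_sub]
    rw [this]; exact h
  · have h2 : Real.sqrt (L p ⬝ᵥ L p) = ‖(p : EuclideanSpace ℝ (Fin d))‖ := by
      rw [← norm_symm_eq]
      simp [hL]
    rw [h2]
    have h3 : ‖(p : EuclideanSpace ℝ (Fin d))‖ = ‖p‖ := rfl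
    have h4 : ‖p‖ ≤ ‖Submodule.orthogonalProjection E2‖ * ‖u'‖ := ContinuousLinearMap.le_opNorm _ _
    have h5 : ‖u'‖ = 1 := by rw [hu', norm_symm_eq, hu, Real.sqrt_one]
    have h6 : ‖Submodule.orthogonalProjection E2‖ ≤ 1 := Submodule.orthogonalProjection_norm_le _
    rw [h3]
    calc ‖p‖ ≤ ‖Submodule.orthogonalProjection E2‖ * ‖u'‖ := h4
      _ ≤ 1 * 1 := by
          apply mul_le_mul h6 h5.le (norm_nonneg _) zero_le_one
      _ = 1 := mul_one 1

lemma key_det_bound {d k : ℕ} (E : Submodule ℝ (Fin d → ℝ)) (hE : Module.finrank ℝ E = k)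
    {δ : ℝ} (hδ : 0 < δ) (v : Fin d → Fin d → ℝ) (T : Finset (Fin d)) (hT : T.card = k + 1)
    (hnormv : ∀ i, i ∉ T → v i ⬝ᵥ v i = 1)
    (y : Fin d → Fin d → ℝ) (hyE : ∀ i ∈ T, y i ∈ E)
    (hz : ∀ i ∈ T, Real.sqrt ((v i - y i) ⬝ᵥ (v i - y i)) ≤ δ)
    (hy1 : ∀ i ∈ T, Real.sqrt (y i ⬝ᵥ y i) ≤ 1) :
    |Matrix.det (Matrix.of v)| ≤ (1 + δ) ^ (k + 1) - 1 := by
  classical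
  set m' : Fin d → Fin d → ℝ := fun i => if i ∈ T then y i else v i with hm'
  set m : Fin d → Fin d → ℝ := fun i => v i - m' i with hm
  have hv : v = T.piecewise (m + m') m' := by
    funext i
    by_cases hi : i ∈ T
    · rw [Finset.piecewise_eq_of_mem _ _ _ hi]
      simp [hm]
    · rw [Finset.piecewise_eq_of_notMem _ _ _ hi, hm']
      simp [hi]
  set f := (Matrix.detRowAlternating : (Fin d → ℝ) [⋀^Fin d]→ₗ[ℝ] ℝ) with hf
  have hdet_eq : ∀ w : Fin d → Fin d → ℝ, (Matrix.of w).det = f w := fun _ => rfl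
  have hexp : (Matrix.of v).det = ∑ s ∈ T.powerset, f (s.piecewise m m') := by
    rw [hdet_eq, hv]
    exact f.toMultilinearMap.map_piecewise_add m m' T
  -- the empty-set term vanishes
  have hzero : f m' = 0 := by
    rw [← hdet_eq]
    apply det_eq_zero_of_not_li
    intro hli
    have hli2 : LinearIndependent ℝ (fun i : {i // i ∈ T} => (Matrix.of m') i.1) :=
      hli.comp Subtype.val Subtype.val_injective
    have hmem : ∀ i : {i // i ∈ T}, m' i.1 ∈ E := by
      intro i; simp only [hm', if_pos i.2]; exact hyE i.1 i.2
    set w : {i // i ∈ T} → E := fun i => ⟨m' i.1, hmem i⟩ with hw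
    have hwli : LinearIndependent ℝ w := by
      apply LinearIndependent.of_comp E.subtype
      exact hli2
    have := hwli.fintype_card_le_finrank
    rw [hE, Fintype.card_coe, hT] at this
    omega
  -- per-term bounds
  have hterm : ∀ s ∈ T.powerset, |f (s.piecewise m m')| ≤ if s = ∅ then 0 else δ ^ s.card := by
    intro s hs
    rw [Finset.mem_powerset] at hs
    by_cases hse : s = ∅
    · rw [if_pos hse, hse]
      have hpe : (∅ : Finset (Fin d)).piecewise m m' = m' := by
        funext i; exact Finset.piecewise_eq_of_notMem _ _ _ (Finset.notMem_empty i)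
      rw [hpe, hzero, abs_zero]
    · rw [if_neg hse]
      rw [← hdet_eq]
      refine le_trans (abs_det_le_prod_norm_row _) ?_
      have hbound : ∀ i : Fin d, Real.sqrt ((Matrix.of (s.piecewise m m')) i ⬝ᵥ
          (Matrix.of (s.piecewise m m')) i) ≤ if i ∈ s then δ else 1 := by
        intro i
        by_cases hi : i ∈ s
        · rw [if_pos hi]
          have : (Matrix.of (s.piecewise m m')) i = v i - y i := by
            show s.piecewise m m' i = _
            rw [Finset.piecewise_eq_of_mem _ _ _ hi, hm]
            simp only [hm', if_pos (hs hi)]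
          rw [this]
          exact hz i (hs hi)
        · rw [if_neg hi]
          have : (Matrix.of (s.piecewise m m')) i = m' i := by
            show s.piecewise m m' i = _
            rw [Finset.piecewise_eq_of_notMem _ _ _ hi]
          rw [this]
          by_cases hiT : i ∈ T
          · simp only [hm', if_pos hiT]
            exact hy1 i hiT
          · simp only [hm', if_neg hiT]
            rw [hnormv i hiT, Real.sqrt_one]
      refine le_trans (Finset.prod_le_prod (fun i _ => Real.sqrt_nonneg _)
        (fun i _ => hbound i)) ?_
      rw [Finset.prod_ite_mem, Finset.univ_inter, Finset.prod_const]
  -- sum up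
  have habs : |(Matrix.of v).det| ≤ ∑ s ∈ T.powerset, (if s = ∅ then (0:ℝ) else δ ^ s.card) := by
    rw [hexp]
    exact le_trans (Finset.abs_sum_le_sum_abs _ _) (Finset.sum_le_sum hterm)
  refine le_trans habs ?_
  have hemp : (∅ : Finset (Fin d)) ∈ T.powerset := Finset.empty_mem_powerset T
  have hsum1 : ∑ s ∈ T.powerset, (if s = ∅ then (0:ℝ) else δ ^ s.card)
      = ∑ s ∈ T.powerset.erase ∅, δ ^ s.card := by
    rw [← Finset.sum_erase_add _ _ hemp, if_pos rfl, add_zero]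
    exact Finset.sum_congr rfl fun s hs => if_neg (Finset.ne_of_mem_erase hs)
  have hsum2 : ∑ s ∈ T.powerset, (δ:ℝ) ^ s.card = (1 + δ) ^ (k + 1) := by
    have := Finset.prod_add (fun _ : Fin d => δ) (fun _ => (1:ℝ)) T
    have h2 : ∑ s ∈ T.powerset, (δ:ℝ) ^ s.card = (δ + 1) ^ T.card := by
      simpa using this.symm
    rw [h2, hT, add_comm]
  have hsum3 : ∑ s ∈ T.powerset.erase ∅, (δ:ℝ) ^ s.card = (1 + δ) ^ (k + 1) - 1 := by
    have := Finset.sum_erase_add _ (fun s : Finset (Fin d) => (δ:ℝ) ^ s.card) hemp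
    rw [hsum2] at this
    simp only [Finset.card_empty, pow_zero] at this
    linarith
  rw [hsum1, hsum3]

/-- Let `x` be `n` unit vectors spanning `ℝ^d`, `E` a subspace of dimension `k < d`,
and `A ⊆ [n]` with `|A| = k + 1` such that `(x i)_{i ∈ A}` are linearly independent and
`dist (x i, E) ≤ δ` for each `i ∈ A`. Then `A` can be completed by a set `B` of
`d - k - 1` further indices so that `(x i)_{i ∈ A ∪ B}` is a basis of `ℝ^d` whose
determinant has absolute value at most `(1 + δ)^{k+1} - 1`. -/
theorem stmt15 {d n : ℕ} (x : Fin n → Fin d → ℝ) (δ : ℝ) (hδ : 0 < δ)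
    (hunit : ∀ i, x i ⬝ᵥ x i = 1)
    (hspan : Submodule.span ℝ (Set.range x) = ⊤)
    (E : Submodule ℝ (Fin d → ℝ)) (k : ℕ) (hk : k < d)
    (hE : Module.finrank ℝ E = k)
    (A : Finset (Fin n)) (hA : A.card = k + 1)
    (hind : LinearIndependent ℝ (fun i : {i // i ∈ A} => x i.1))
    (hclose : ∀ i ∈ A, ∃ y ∈ E, Real.sqrt ((x i - y) ⬝ᵥ (x i - y)) ≤ δ) :
    ∃ B : Finset (Fin n), Disjoint A B ∧ B.card = d - k - 1 ∧
      ∀ e : Fin d ≃ {i // i ∈ A ∪ B},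
        LinearIndependent ℝ (fun i : Fin d => x (e i).1) ∧
        |Matrix.det (Matrix.of fun i j => x (e j).1 i)| ≤ (1 + δ) ^ (k + 1) - 1 := by
  classical
  -- Step 0: good approximants with norm ≤ 1
  have hproj : ∀ i ∈ A, ∃ y, y ∈ E ∧ Real.sqrt ((x i - y) ⬝ᵥ (x i - y)) ≤ δ ∧
      Real.sqrt (y ⬝ᵥ y) ≤ 1 := by
    intro i hi
    obtain ⟨y0, hy0, hy0d⟩ := hclose i hi
    exact exists_good_proj E (x i) y0 hy0 hy0d (hunit i)
  set Y : Fin n → (Fin d → ℝ) := fun i => if h : i ∈ A then (hproj i h).choose else 0 with hY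
  have hYp : ∀ i (h : i ∈ A), Y i ∈ E ∧ Real.sqrt ((x i - Y i) ⬝ᵥ (x i - Y i)) ≤ δ ∧
      Real.sqrt (Y i ⬝ᵥ Y i) ≤ 1 := by
    intro i h
    simp only [hY, dif_pos h]
    exact (hproj i h).choose_spec
  -- Step 1: construct B
  have hinjA : Function.Injective (fun i : {i // i ∈ A} => x i.1) := hind.injective
  set s : Set (Fin d → ℝ) := x '' ↑A with hs_def
  have hs : LinearIndepOn ℝ id s := (show LinearIndepOn ℝ x (↑A) from hind).id_image
  have hsub : s ⊆ Set.range x := by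
    rintro _ ⟨i, _, rfl⟩; exact ⟨i, rfl⟩
  set C : Set (Fin d → ℝ) := hs.extend hsub with hC_def
  have hCi : LinearIndependent ℝ ((↑) : C → (Fin d → ℝ)) := hs.linearIndepOn_extend hsub
  have hsC : s ⊆ C := hs.subset_extend hsub
  have hCr : C ⊆ Set.range x := hs.extend_subset hsub
  have hCspan : Submodule.span ℝ C = ⊤ := by
    have h1 : Set.range x ⊆ (Submodule.span ℝ C : Set (Fin d → ℝ)) := hs.subset_span_extend hsub
    have h2 : Submodule.span ℝ (Set.range x) ≤ Submodule.span ℝ C := Submodule.span_le.mpr h1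
    rw [hspan] at h2
    exact top_unique h2
  have hCfin : C.Finite := hCi.setFinite
  haveI : Fintype C := hCfin.fintype
  have bC : Module.Basis C ℝ (Fin d → ℝ) := Module.Basis.mk hCi (by rw [Subtype.range_coe, hCspan])
  have hCcard : C.toFinset.card = d := by
    rw [Set.toFinset_card]
    rw [← Module.finrank_eq_card_basis bC]
    simp [Module.finrank_fintype_fun_eq_card]
  set sF : Finset (Fin d → ℝ) := A.image x with hsF
  have hsFC : ↑sF = s := by rw [hsF, hs_def, Finset.coe_image]
  have hsFcard : sF.card = k + 1 := by
    rw [hsF, Finset.card_image_of_injOn, hA]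
    intro a ha b hb hab
    have h0 := hinjA (a₁ := ⟨a, ha⟩) (a₂ := ⟨b, hb⟩) hab
    exact congrArg Subtype.val h0
  have hsFsubC : sF ⊆ C.toFinset := by
    intro w hw
    rw [Set.mem_toFinset]
    apply hsC
    rw [← hsFC]; exact_mod_cast hw
  set D : Finset (Fin d → ℝ) := C.toFinset \ sF with hD
  have hDcard : D.card = d - k - 1 := by
    rw [hD, Finset.card_sdiff_of_subset hsFsubC, hCcard, hsFcard]
    omega
  have hDfn : ∀ w : {w // w ∈ D}, ∃ i : Fin n, x i = w.1 := by
    intro w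
    have : w.1 ∈ C := by
      have := (Finset.mem_sdiff.mp w.2).1
      rwa [Set.mem_toFinset] at this
    exact hCr this
  set g : {w // w ∈ D} → Fin n := fun w => (hDfn w).choose with hg
  have hgx : ∀ w : {w // w ∈ D}, x (g w) = w.1 := fun w => (hDfn w).choose_spec
  set B : Finset (Fin n) := D.attach.image g with hB
  have hginj : Function.Injective g := by
    intro w1 w2 h
    have : x (g w1) = x (g w2) := by rw [h]
    rw [hgx w1, hgx w2] at this
    exact Subtype.ext this
  have hBcard : B.card = d - k - 1 := by
    rw [hB, Finset.card_image_of_injective _ hginj, Finset.card_attach, hDcard]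
  have hBmem : ∀ j ∈ B, ∃ w : {w // w ∈ D}, g w = j := by
    intro j hj
    obtain ⟨w, _, hw⟩ := Finset.mem_image.mp hj
    exact ⟨w, hw⟩
  have hxB : ∀ j ∈ B, x j ∈ D := by
    intro j hj
    obtain ⟨w, hw⟩ := hBmem j hj
    rw [← hw, hgx w]
    exact w.2
  have hxA : ∀ j ∈ A, x j ∈ sF := fun j hj => Finset.mem_image_of_mem x hj
  have hdisj : Disjoint A B := by
    rw [Finset.disjoint_left]
    intro a ha hb
    have h1 := hxA a ha
    have h2 := hxB a hb
    exact (Finset.mem_sdiff.mp h2).2 h1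
  refine ⟨B, hdisj, hBcard, ?_⟩
  -- injectivity of x on A ∪ B
  have hxinj : ∀ j1 j2 : {i // i ∈ A ∪ B}, x j1.1 = x j2.1 → j1 = j2 := by
    rintro ⟨j1, hj1⟩ ⟨j2, hj2⟩ h
    rcases Finset.mem_union.mp hj1 with h1 | h1 <;> rcases Finset.mem_union.mp hj2 with h2 | h2
    · have h0 := hinjA (a₁ := ⟨j1, h1⟩) (a₂ := ⟨j2, h2⟩) h
      have h12 : j1 = j2 := congrArg Subtype.val h0
      exact Subtype.ext h12
    · exfalso
      apply (Finset.mem_sdiff.mp (hxB j2 h2)).2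
      rw [← h]; exact hxA j1 h1
    · exfalso
      apply (Finset.mem_sdiff.mp (hxB j1 h1)).2
      rw [h]; exact hxA j2 h2
    · obtain ⟨w1, hw1⟩ := hBmem j1 h1
      obtain ⟨w2, hw2⟩ := hBmem j2 h2
      have hww : w1 = w2 := by
        apply Subtype.ext
        rw [← hgx w1, ← hgx w2, hw1, hw2, h]
      have hgg : g w1 = g w2 := congrArg g hww
      rw [hw1, hw2] at hgg
      exact Subtype.ext hgg
  -- membership of x j in C
  have hxC : ∀ j : {i // i ∈ A ∪ B}, x j.1 ∈ C := by
    rintro ⟨j, hj⟩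
    rcases Finset.mem_union.mp hj with h1 | h1
    · exact hsC ⟨j, h1, rfl⟩
    · have := hxB j h1
      have := (Finset.mem_sdiff.mp this).1
      rwa [Set.mem_toFinset] at this
  have hli : LinearIndependent ℝ (fun j : {i // i ∈ A ∪ B} => x j.1) := by
    set φ : {i // i ∈ A ∪ B} → C := fun j => ⟨x j.1, hxC j⟩ with hφ
    have hφinj : Function.Injective φ := by
      intro j1 j2 h
      exact hxinj j1 j2 (congrArg Subtype.val h)
    exact hCi.comp φ hφinj
  intro e
  constructor
  · exact hli.comp e e.injective
  -- determinant bound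
  have htr : (Matrix.of fun i j => x ((e j) : Fin n) i) = (Matrix.of fun i j => x ((e i) : Fin n) j)ᵀ := rfl
  rw [htr, Matrix.det_transpose]
  set T : Finset (Fin d) := Finset.univ.filter (fun i => ((e i) : Fin n) ∈ A) with hT_def
  have hTmem : ∀ i, i ∈ T ↔ ((e i) : Fin n) ∈ A := by
    intro i; simp [hT_def]
  have hTcard : T.card = k + 1 := by
    rw [← hA]
    apply Finset.card_bij (fun i _ => ((e i) : Fin n))
    · intro a ha; exact (hTmem a).mp ha
    · intro a _ b _ hab; exact e.injective (Subtype.ext hab)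
    · intro b hb
      refine ⟨e.symm ⟨b, Finset.mem_union_left _ hb⟩, ?_, ?_⟩
      · rw [hTmem, Equiv.apply_symm_apply]; exact hb
      · rw [Equiv.apply_symm_apply]
  apply key_det_bound E hE hδ _ T hTcard
  · intro i _; exact hunit _
  · intro i hi; exact (hYp _ ((hTmem i).mp hi)).1
  · intro i hi; exact (hYp _ ((hTmem i).mp hi)).2.1
  · intro i hi; exact (hYp _ ((hTmem i).mp hi)).2.2
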